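/- Let D > 0, l > 0 and α ∈ ℝ. There exists z with 0 < z < |α| and e^{(l/D)z} = (α + z)/(α − z) if and only if α > 2D/l; moreover, when α > 2D/l, such z is unique. -/

import Mathlib

open Real Set

noncomputable def Gaux (c α : ℝ) : ℝ → ℝ :=
  fun z => c * z - (Real.log (α + z) - Real.log (α - z))

lemma Gaux_hasDerivAt (c α z : ℝ) (h1 : α + z ≠ 0) (h2 : α - z ≠ 0) :
    HasDerivAt (Gaux c α) (c - ((α + z)⁻¹ + (α - z)⁻¹)) z := by
  have d1 : HasDerivAt (fun y : ℝ => α + y) 1 z := by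
    simpa using (hasDerivAt_id z).const_add α
  have d2 : HasDerivAt (fun y : ℝ => α - y) (-1) z := by
    simpa using (hasDerivAt_id z).const_sub α
  have l1 := d1.log h1
  have l2 := d2.log h2
  have dz : HasDerivAt (fun y : ℝ => c * y) c z := by
    simpa using (hasDerivAt_id z).const_mul c
  have h := dz.sub (l1.sub l2)
  refine h.congr_deriv ?_
  ring

lemma Gaux_zero (c α : ℝ) : Gaux c α 0 = 0 := by simp [Gaux]

lemma Gaux_contOn (c α : ℝ) (hα : 0 < α) : ContinuousOn (Gaux c α) (Ico 0 α) := by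
  intro x hx
  have h1 : α + x ≠ 0 := by nlinarith [hx.1]
  have h2 : α - x ≠ 0 := by nlinarith [hx.2]
  exact (Gaux_hasDerivAt c α x h1 h2).continuousAt.continuousWithinAt

lemma Gaux_deriv_eq (c α x : ℝ) (h1 : α + x ≠ 0) (h2 : α - x ≠ 0) :
    deriv (Gaux c α) x = c - ((α + x)⁻¹ + (α - x)⁻¹) :=
  (Gaux_hasDerivAt c α x h1 h2).deriv

lemma Gaux_strictConcave (c α : ℝ) (hα : 0 < α) :
    StrictConcaveOn ℝ (Ico 0 α) (Gaux c α) := by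
  apply StrictAntiOn.strictConcaveOn_of_deriv (convex_Ico 0 α) (Gaux_contOn c α hα)
  rw [interior_Ico]
  intro x hx y hy hxy
  have hx1 : α + x ≠ 0 := by nlinarith [hx.1]
  have hx2 : α - x ≠ 0 := by nlinarith [hx.2]
  have hy1 : α + y ≠ 0 := by nlinarith [hy.1]
  have hy2 : α - y ≠ 0 := by nlinarith [hy.2]
  rw [Gaux_deriv_eq c α x hx1 hx2, Gaux_deriv_eq c α y hy1 hy2]
  have key : (α + x)⁻¹ + (α - x)⁻¹ < (α + y)⁻¹ + (α - y)⁻¹ := by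
    have e1 : (α + x)⁻¹ + (α - x)⁻¹ = 2 * α / ((α + x) * (α - x)) := by
      field_simp; ring
    have e2 : (α + y)⁻¹ + (α - y)⁻¹ = 2 * α / ((α + y) * (α - y)) := by
      field_simp; ring
    rw [e1, e2]
    apply div_lt_div_of_pos_left (by linarith) (by nlinarith [hy.1, hy.2])
    nlinarith [hx.1, hx.2, hy.1, hy.2]
  linarith

/-- If `c * α ≤ 2` then `G < 0` on `(0, α)`. -/
lemma Gaux_neg (c α : ℝ) (hc : 0 < c) (hα : 0 < α) (h2 : c * α ≤ 2) :
    ∀ z ∈ Ioo (0:ℝ) α, Gaux c α z < 0 := by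
  have hanti : StrictAntiOn (Gaux c α) (Ico 0 α) := by
    apply strictAntiOn_of_deriv_neg (convex_Ico 0 α) (Gaux_contOn c α hα)
    rw [interior_Ico]
    intro x hx
    have hx1 : α + x ≠ 0 := by nlinarith [hx.1]
    have hx2 : α - x ≠ 0 := by nlinarith [hx.2]
    rw [Gaux_deriv_eq c α x hx1 hx2]
    have e1 : (α + x)⁻¹ + (α - x)⁻¹ = 2 * α / ((α + x) * (α - x)) := by
      field_simp; ring
    rw [e1, sub_neg, lt_div_iff₀ (by nlinarith [hx.1, hx.2])]
    have hcle : c ≤ 2 / α := by rw [le_div_iff₀ hα]; linarith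
    have : c * ((α + x) * (α - x)) ≤ 2 / α * ((α + x) * (α - x)) := by
      apply mul_le_mul_of_nonneg_right hcle (by nlinarith [hx.1, hx.2])
    have h3 : 2 / α * ((α + x) * (α - x)) < 2 * α := by
      rw [div_mul_eq_mul_div, div_lt_iff₀ hα]
      nlinarith [hx.1, hx.2]
    linarith
  intro z hz
  have := hanti (left_mem_Ico.2 hα) ⟨le_of_lt hz.1, hz.2⟩ hz.1
  rwa [Gaux_zero] at this

/-- Roots of the exponential equation in `(0, α)` are zeros of `G`. -/
lemma Gaux_of_root (c α z : ℝ) (hz0 : 0 < z) (hzα : z < α)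
    (heq : Real.exp (c * z) = (α + z) / (α - z)) : Gaux c α z = 0 := by
  have h1 : (0:ℝ) < α + z := by linarith
  have h2 : (0:ℝ) < α - z := by linarith
  have : c * z = Real.log ((α + z) / (α - z)) := by
    rw [← heq, Real.log_exp]
  rw [Real.log_div (ne_of_gt h1) (ne_of_gt h2)] at this
  simp [Gaux, this]

theorem stmt_7 (D l α : ℝ) (hD : 0 < D) (hl : 0 < l) :
    ((∃ z : ℝ, 0 < z ∧ z < |α| ∧
        Real.exp (l / D * z) = (α + z) / (α - z)) ↔ 2 * D / l < α) ∧
    (2 * D / l < α → ∃! z : ℝ, 0 < z ∧ z < |α| ∧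
        Real.exp (l / D * z) = (α + z) / (α - z)) := by
  set c := l / D with hc_def
  have hc : 0 < c := div_pos hl hD
  have hiff : (2 * D / l < α) ↔ 2 < c * α := by
    rw [div_lt_iff₀ hl, hc_def, div_mul_eq_mul_div, lt_div_iff₀ hD]
    constructor <;> intro h <;> nlinarith
  -- Existence part when 2 < c * α
  have hexists : 2 < c * α → ∃ z : ℝ, 0 < z ∧ z < α ∧
      Real.exp (c * z) = (α + z) / (α - z) := by
    intro h2
    have hα : 0 < α := by nlinarith
    set z₁ : ℝ := α / 2 - 1 / c with hz₁def
    set z₂ : ℝ := α - α * Real.exp (-(c * α)) with hz₂def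
    have hz₁pos : 0 < z₁ := by
      rw [hz₁def, sub_pos, div_lt_div_iff₀ hc two_pos]
      linarith
    have hexpneg : Real.exp (-(c * α)) < 1 := by
      rw [Real.exp_lt_one_iff]
      nlinarith
    have hz₂α : z₂ < α := by
      rw [hz₂def]
      nlinarith [Real.exp_pos (-(c * α))]
    have hz₁α : z₁ < α / 2 := by
      rw [hz₁def]
      have : 0 < 1 / c := by positivity
      linarith
    have hz₁z₂ : z₁ < z₂ := by
      have hhalf : Real.exp (-(c * α)) < 1 / 2 := by
        have hmono : Real.exp (-(c * α)) < Real.exp (-2) := by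
          apply Real.exp_lt_exp.2; linarith
        have h2e : Real.exp (-2 : ℝ) < 1 / 2 := by
          rw [Real.exp_neg]
          have h3 : (3:ℝ) ≤ Real.exp 2 := by nlinarith [Real.add_one_le_exp (2:ℝ)]
          calc (Real.exp 2)⁻¹ ≤ 3⁻¹ := inv_anti₀ (by norm_num) h3
            _ < 1 / 2 := by norm_num
        linarith
      have hmid : α / 2 < z₂ := by rw [hz₂def]; nlinarith
      exact lt_trans hz₁α hmid
    -- G z₁ > 0
    have hGz₁ : 0 < Gaux c α z₁ := by
      have h1 : (0:ℝ) < α + z₁ := by linarith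
      have h2' : (0:ℝ) < α - z₁ := by linarith
      have hexp_ge : c * z₁ + 1 ≤ Real.exp (c * z₁) := Real.add_one_le_exp (c * z₁)
      have hcz₁ : c * z₁ = c * α / 2 - 1 := by
        rw [hz₁def]; field_simp
      have hratio : (α + z₁) / (α - z₁) < Real.exp (c * z₁) := by
        rw [div_lt_iff₀ h2']
        have key : α + z₁ < (1 + c * z₁) * (α - z₁) := by
          have hq : (1 + c * z₁) * (α - z₁) = α + z₁ + z₁ * (c * α - 2 - c * z₁) := by
            ring
          rw [hq]
          have : 0 < c * α - 2 - c * z₁ := by rw [hcz₁]; linarith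
          nlinarith
        nlinarith
      have hlog : Real.log ((α + z₁) / (α - z₁)) < c * z₁ := by
        calc Real.log ((α + z₁) / (α - z₁)) < Real.log (Real.exp (c * z₁)) :=
              Real.log_lt_log (div_pos h1 h2') hratio
          _ = c * z₁ := Real.log_exp _
      rw [Real.log_div (ne_of_gt h1) (ne_of_gt h2')] at hlog
      simp only [Gaux]
      linarith
    -- G z₂ < 0
    have hGz₂ : Gaux c α z₂ < 0 := by
      have hz₂pos : 0 < z₂ := lt_trans hz₁pos hz₁z₂
      have h1 : (0:ℝ) < α + z₂ := by linarith
      have h2' : (0:ℝ) < α - z₂ := by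
        rw [hz₂def]; ring_nf; positivity
      have hαz₂ : α - z₂ = α * Real.exp (-(c * α)) := by rw [hz₂def]; ring
      have hratio : Real.exp (c * z₂) < (α + z₂) / (α - z₂) := by
        have hstep : Real.exp (c * α) < (α + z₂) / (α - z₂) := by
          rw [lt_div_iff₀ h2', hαz₂]
          have : Real.exp (c * α) * (α * Real.exp (-(c * α))) = α := by
            rw [← mul_assoc, mul_comm (Real.exp (c * α)) α, mul_assoc,
              ← Real.exp_add]
            simp
          rw [this]
          linarith
        have : Real.exp (c * z₂) < Real.exp (c * α) := by
          apply Real.exp_lt_exp.2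
          exact mul_lt_mul_of_pos_left hz₂α hc
        linarith
      have hlog : c * z₂ < Real.log ((α + z₂) / (α - z₂)) := by
        calc c * z₂ = Real.log (Real.exp (c * z₂)) := (Real.log_exp _).symm
          _ < Real.log ((α + z₂) / (α - z₂)) :=
              Real.log_lt_log (Real.exp_pos _) hratio
      rw [Real.log_div (ne_of_gt h1) (ne_of_gt h2')] at hlog
      simp only [Gaux]
      linarith
    -- IVT
    have hcont : ContinuousOn (Gaux c α) (Icc z₁ z₂) := by
      apply (Gaux_contOn c α hα).mono
      intro x hx
      exact ⟨le_trans (le_of_lt hz₁pos) hx.1, lt_of_le_of_lt hx.2 hz₂α⟩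
    have hsub : Ioo (Gaux c α z₂) (Gaux c α z₁) ⊆ Gaux c α '' Ioo z₁ z₂ :=
      intermediate_value_Ioo' (le_of_lt hz₁z₂) hcont
    obtain ⟨z, hzmem, hGz⟩ := hsub ⟨hGz₂, hGz₁⟩
    refine ⟨z, lt_trans hz₁pos hzmem.1, lt_trans hzmem.2 hz₂α, ?_⟩
    have h1 : (0:ℝ) < α + z := by
      have := lt_trans hz₁pos hzmem.1; linarith
    have h2' : (0:ℝ) < α - z := by
      have := lt_trans hzmem.2 hz₂α; linarith
    have hlogeq : c * z = Real.log (α + z) - Real.log (α - z) := by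
      have : Gaux c α z = 0 := hGz
      simp only [Gaux] at this
      linarith
    rw [← Real.log_div (ne_of_gt h1) (ne_of_gt h2')] at hlogeq
    rw [hlogeq, Real.exp_log (div_pos h1 h2')]
  -- Forward direction: root implies 2 < c * α
  have hfwd : (∃ z : ℝ, 0 < z ∧ z < |α| ∧
      Real.exp (c * z) = (α + z) / (α - z)) → 2 < c * α := by
    rintro ⟨z, hz0, hzabs, heq⟩
    by_contra hcon
    push_neg at hcon
    rcases le_or_gt α 0 with hα | hα
    · -- α ≤ 0 : contradiction
      have habs : |α| = -α := abs_of_nonpos hα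
      rw [habs] at hzabs
      have h1 : α + z < 0 := by linarith
      have h2 : α - z < 0 := by linarith
      have hratio : (α + z) / (α - z) < 1 := by
        rw [div_lt_one_iff]
        right; right
        exact ⟨h2, by linarith⟩
      have hexp : 1 < Real.exp (c * z) := by
        rw [← Real.exp_zero]
        apply Real.exp_lt_exp.2
        positivity
      linarith [heq ▸ hexp]
    · have habs : |α| = α := abs_of_pos hα
      rw [habs] at hzabs
      have hG0 : Gaux c α z = 0 := Gaux_of_root c α z hz0 hzabs heq
      have := Gaux_neg c α hc hα hcon z ⟨hz0, hzabs⟩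
      linarith
  constructor
  · constructor
    · intro h; exact hiff.2 (hfwd h)
    · intro h
      obtain ⟨z, hz0, hzα, heq⟩ := hexists (hiff.1 h)
      have hα : 0 < α := by nlinarith [hiff.1 h, hc]
      exact ⟨z, hz0, by rwa [abs_of_pos hα], heq⟩
  · intro h
    have h2 := hiff.1 h
    have hα : 0 < α := by nlinarith
    obtain ⟨z, hz0, hzα, heq⟩ := hexists h2
    refine ⟨z, ⟨hz0, by rwa [abs_of_pos hα], heq⟩, ?_⟩
    rintro w ⟨hw0, hwabs, hweq⟩
    rw [abs_of_pos hα] at hwabs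
    by_contra hne
    -- both are zeros of G in (0, α); strict concavity with G 0 = 0 forbids two zeros
    have hGz : Gaux c α z = 0 := Gaux_of_root c α z hz0 hzα heq
    have hGw : Gaux c α w = 0 := Gaux_of_root c α w hw0 hwabs hweq
    have hconc := Gaux_strictConcave c α hα
    -- WLOG: for a < b with G a = G b = 0, contradiction
    have key : ∀ a b : ℝ, 0 < a → a < b → b < α → Gaux c α a = 0 → Gaux c α b = 0 → False := by
      intro a b ha hab hbα hGa hGb
      have hb0 : (0:ℝ) < b := lt_trans ha hab
      have ht0 : 0 < a / b := div_pos ha hb0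
      have ht1 : a / b < 1 := (div_lt_one hb0).2 hab
      have hmem0 : (0:ℝ) ∈ Ico (0:ℝ) α := left_mem_Ico.2 hα
      have hmemb : b ∈ Ico (0:ℝ) α := ⟨le_of_lt hb0, hbα⟩
      have hne0b : (0:ℝ) ≠ b := ne_of_lt hb0
      have hlt := hconc.2 hmem0 hmemb hne0b (by linarith : (0:ℝ) < 1 - a / b) ht0
        (by ring)
      have habeq : (1 - a / b) • (0:ℝ) + (a / b) • b = a := by
        simp only [smul_eq_mul, mul_zero, zero_add]
        field_simp
      rw [habeq, Gaux_zero, hGa, hGb] at hlt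
      simp at hlt
    rcases lt_or_gt_of_ne hne with hlt | hgt
    · exact key w z hw0 hlt hzα hGw hGz
    · exact key z w hz0 hgt hwabs hGz hGw
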